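/- Let $D_1,\dots,D_m$ be real $d\times d$ diagonal matrices and for each $j\in\{1,\dots,d\}$ let $\mathbf{z}_j=(D_1(j,j),\dots,D_m(j,j))\in\mathbb{R}^m$. Suppose that for every pair $j\neq k$ the vectors $\mathbf{z}_j$ and $\mathbf{z}_k$ are nonzero and not collinear. If $M\in\mathbb{R}^{d\times d}$ is invertible and $M^\top D_i M$ is diagonal for all $i$, then $M = P\Lambda$ for some permutation matrix $P$ and invertible diagonal matrix $\Lambda$ (i.e., $M$ has exactly one nonzero entry in each row and each column). -/

import Mathlib

open Matrix

/-- Kleinsteuber–Shen uniqueness theorem for exact joint diagonalization. -/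
theorem stmt0 {d m : ℕ} (D : Fin m → Matrix (Fin d) (Fin d) ℝ)
    (hD : ∀ i, (D i).IsDiag)
    (z : Fin d → Fin m → ℝ) (hz : ∀ j i, z j i = D i j j)
    (hnc : ∀ j k : Fin d, j ≠ k → z j ≠ 0 ∧ z k ≠ 0 ∧ ∀ c : ℝ, z j ≠ c • z k)
    (M : Matrix (Fin d) (Fin d) ℝ) (hM : IsUnit M)
    (hdiag : ∀ i, (Mᵀ * D i * M).IsDiag) :
    ∃ (σ : Equiv.Perm (Fin d)) (c : Fin d → ℝ), (∀ j, c j ≠ 0) ∧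
      M = Matrix.of fun i j => if i = σ j then c j else 0 := by
  classical
  have hdet : IsUnit M.det := (Matrix.isUnit_iff_isUnit_det M).mp hM
  have hdetT : IsUnit Mᵀ.det := by rwa [Matrix.det_transpose]
  set A := Mᵀ⁻¹ with hAdef
  have hAM : A * Mᵀ = 1 := Matrix.nonsing_inv_mul _ hdetT
  -- (D i * M) entrywise
  have hDM : ∀ i l j, (D i * M) l j = z l i * M l j := by
    intro i l j
    rw [Matrix.mul_apply]
    rw [Finset.sum_eq_single_of_mem l (Finset.mem_univ l)
      (fun t _ ht => by rw [hD i (Ne.symm ht), zero_mul])]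
    rw [hz]
  -- key identity D i * M = A * (Mᵀ * D i * M)
  have hkey : ∀ i, D i * M = A * (Mᵀ * D i * M) := by
    intro i
    calc D i * M = 1 * (D i * M) := (one_mul _).symm
      _ = (A * Mᵀ) * (D i * M) := by rw [hAM]
      _ = A * (Mᵀ * D i * M) := by rw [Matrix.mul_assoc, Matrix.mul_assoc]
  -- entrywise version
  have hent : ∀ i l j, z l i * M l j = A l j * (Mᵀ * D i * M) j j := by
    intro i l j
    have h1 := congrFun (congrFun (hkey i) l) j
    have h2 : (A * (Mᵀ * D i * M)) l j = A l j * (Mᵀ * D i * M) j j := by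
      rw [Matrix.mul_apply]
      exact Finset.sum_eq_single_of_mem j (Finset.mem_univ j)
        (fun t _ ht => by rw [hdiag i ht, mul_zero])
    rw [← hDM i l j, h1, h2]
  -- at most one nonzero entry per column
  have huniq : ∀ j l l', M l j ≠ 0 → M l' j ≠ 0 → l = l' := by
    intro j l l' hl hl'
    by_contra hne
    obtain ⟨hzl, hzl', hcol⟩ := hnc l l' hne
    -- A l' j ≠ 0
    obtain ⟨i0, hi0⟩ : ∃ i, z l' i ≠ 0 := by
      by_contra h
      push_neg at h
      exact hzl' (funext h)
    have hA' : A l' j ≠ 0 := by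
      intro h
      have := hent i0 l' j
      rw [h, zero_mul] at this
      exact (mul_ne_zero hi0 hl') this
    apply hcol ((A l j / M l j) * (M l' j / A l' j))
    funext i
    have e1 := hent i l j
    have e2 := hent i l' j
    have hE : (Mᵀ * D i * M) j j = z l' i * M l' j / A l' j := by
      field_simp
      linarith [e2]
    have : z l i = A l j * (z l' i * M l' j / A l' j) / M l j := by
      field_simp at hE ⊢
      rw [show A l' j * z l i * M l j = z l i * (A l' j * M l j) by ring,
        show z l' i * M l' j * A l j = A l j * (z l' i * M l' j) by ring]
      calc z l i * (A l' j * M l j) = (z l i * M l j) * A l' j := by ring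
        _ = (A l j * (Mᵀ * D i * M) j j) * A l' j := by rw [e1]
        _ = A l j * ((Mᵀ * D i * M) j j * A l' j) := by ring
        _ = A l j * (z l' i * M l' j) := by rw [hE]
    simp only [Pi.smul_apply, smul_eq_mul]
    rw [this]
    field_simp
  -- every column has a nonzero entry
  have hex : ∀ j, ∃ l, M l j ≠ 0 := by
    intro j
    by_contra h
    push_neg at h
    exact hdet.ne_zero (Matrix.det_eq_zero_of_column_eq_zero j h)
  set f : Fin d → Fin d := fun j => (hex j).choose with hf
  have hfspec : ∀ j, M (f j) j ≠ 0 := fun j => (hex j).choose_spec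
  have hzero : ∀ j i, i ≠ f j → M i j = 0 := by
    intro j i hij
    by_contra h
    exact hij (huniq j i (f j) h (hfspec j))
  -- off-diagonal entries expanded
  have hEoff : ∀ i j k, (Mᵀ * D i * M) j k = ∑ t, M t j * (z t i * M t k) := by
    intro i j k
    rw [Matrix.mul_assoc, Matrix.mul_apply]
    refine Finset.sum_congr rfl fun t _ => ?_
    rw [Matrix.transpose_apply, hDM]
  -- f is injective
  have hinj : Function.Injective f := by
    intro j k hjk
    by_contra hne
    set l := f j with hl
    have hlk : f k = l := hjk.symm
    -- z l = 0 from the off-diagonal constraint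
    have hz0 : ∀ i, z l i = 0 := by
      intro i
      have h0 : (Mᵀ * D i * M) j k = 0 := hdiag i hne
      rw [hEoff] at h0
      rw [Finset.sum_eq_single_of_mem l (Finset.mem_univ l)
        (fun t _ ht => by rw [hzero j t (by rw [← hl]; exact ht), zero_mul])] at h0
      have h1 : M l j ≠ 0 := hfspec j
      have h2 : M l k ≠ 0 := by rw [← hlk]; exact hfspec k
      rcases mul_eq_zero.mp h0 with h | h
      · exact absurd h h1
      rcases mul_eq_zero.mp h with h | h
      · exact h
      · exact absurd h h2
    -- but z l ≠ 0
    have : ∃ k', l ≠ k' := by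
      by_cases h : l = j
      · exact ⟨k, by rw [h]; exact hne⟩
      · exact ⟨j, h⟩
    obtain ⟨k', hk'⟩ := this
    exact (hnc l k' hk').1 (funext hz0)
  have hbij : Function.Bijective f := Finite.injective_iff_bijective.mp hinj
  refine ⟨Equiv.ofBijective f hbij, fun j => M (f j) j, fun j => hfspec j, ?_⟩
  ext i j
  simp only [Matrix.of_apply, Equiv.ofBijective_apply]
  by_cases h : i = f j
  · rw [if_pos h, h]
  · rw [if_neg h, hzero j i h]
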